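/- Let q be an odd prime power with q ≡ 1 (mod 2), let g be Gauss sums for a generator ω of the multiplicative characters of F_q^×, and write q^× = q−1. For every m ∉ {0, q^×/2}: g(−2m + q^×/2) = (g(q^×/2)/(q·ω(2)^{−4m}))·g(−4m)·g(2m). -/

import Mathlib

set_option linter.unusedSectionVars false

open Finset

section auxHD

variable {F : Type} [Field F] [Fintype F] [DecidableEq F]

private lemma HD.sum_units_eq {M : Type*} [AddCommMonoid M] (f : F → M) (hf : f 0 = 0) :
    ∑ x : Fˣ, f (x : F) = ∑ x : F, f x := by
  classical
  rw [← Finset.sum_filter_add_sum_filter_not Finset.univ (· ≠ 0) f]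
  have h2 : ∑ x ∈ Finset.univ.filter (¬ · ≠ 0), f x = 0 := by
    rw [Finset.sum_eq_single_of_mem 0 (by simp)]
    · exact hf
    · intro b hb hb0; simp at hb; exact absurd hb hb0
  rw [h2, add_zero,
    Finset.sum_subtype (p := (· ≠ 0)) (s := Finset.univ.filter (· ≠ 0)) (by simp) f]
  exact Fintype.sum_equiv unitsEquivNeZero _ _ (fun x => rfl)

private lemma HD.zpow_apply (ω : MulChar F ℂ) (k : ℤ) (x : Fˣ) :
    (ω ^ k) (x : F) = (ω (x : F)) ^ k := by
  rcases k with n | n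
  · rw [Int.ofNat_eq_coe, zpow_natCast, zpow_natCast, MulChar.pow_apply_coe]
  · rw [zpow_negSucc, zpow_negSucc, ← MulChar.pow_apply_coe,
      ← MulChar.inv_apply_eq_inv', MulChar.inv_apply_eq_inv']

private lemma HD.omega_order (ω : MulChar F ℂ) (hω : ∀ χ : MulChar F ℂ, ∃ m : ℤ, χ = ω ^ m) :
    orderOf ω = Fintype.card F - 1 := by
  have e : MulChar F ℂ ≃* Fˣ :=
    (MulChar.mulEquiv_units (M := F) (R := ℂ)).some
  have hgen : ∀ x : Fˣ, x ∈ Subgroup.zpowers (e ω) := by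
    intro x
    obtain ⟨k, hk⟩ := hω (e.symm x)
    refine ⟨k, ?_⟩
    show e ω ^ k = x
    rw [← map_zpow, ← hk, MulEquiv.apply_symm_apply]
  have : orderOf (e ω) = Fintype.card Fˣ := by
    rw [orderOf_eq_card_of_forall_mem_zpowers hgen, Nat.card_eq_fintype_card]
  have h2 : orderOf ω = Fintype.card Fˣ :=
    (orderOf_injective e.toMonoidHom e.injective ω).symm.trans this
  rw [h2, Fintype.card_units]

private lemma HD.char_ne_two (hodd : Odd (Fintype.card F)) : ringChar F ≠ 2 := by
  intro h
  obtain ⟨n, hp, hc⟩ := FiniteField.card F (ringChar F)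
  rw [h] at hc
  rw [← Nat.not_even_iff_odd, hc] at hodd
  exact hodd (Nat.even_pow.mpr ⟨even_two, n.pos.ne'⟩)

private lemma HD.jac_key (hodd : Odd (Fintype.card F)) {χ : MulChar F ℂ} (hχ : χ ≠ 1) :
    jacobiSum ((quadraticChar F).ringHomComp (Int.castRingHom ℂ)) χ
      = χ 4 * jacobiSum χ χ := by
  have h2 : (2 : F) ≠ 0 := Ring.two_ne_zero (HD.char_ne_two hodd)
  set ρ := (quadraticChar F).ringHomComp (Int.castRingHom ℂ) with hρ
  have step1 : χ 4 * jacobiSum χ χ = ∑ t : F, χ (1 - t ^ 2) := by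
    rw [jacobiSum, Finset.mul_sum]
    have hbij : Function.Bijective (fun t : F => (1 + t) / 2) :=
      Function.bijective_iff_has_inverse.mpr
        ⟨fun x => 2 * x - 1, fun t => by field_simp; ring, fun x => by field_simp; ring⟩
    refine (Fintype.sum_bijective _ hbij (fun t => χ (1 - t ^ 2))
      (fun x => χ 4 * (χ x * χ (1 - x))) fun t => ?_).symm
    rw [← map_mul, ← map_mul]
    congr 1
    field_simp
    ring
  have count : ∀ u : F,
      ((Finset.univ.filter (fun t : F => t ^ 2 = u)).card : ℂ) = ρ u + 1 := by
    intro u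
    have hcount := quadraticChar_card_sqrts (HD.char_ne_two hodd) u
    rw [Set.toFinset_setOf] at hcount
    have h' : ((Finset.univ.filter (fun t : F => t ^ 2 = u)).card : ℤ)
        = quadraticChar F u + 1 := hcount
    have hru : ρ u = ((quadraticChar F u : ℤ) : ℂ) := rfl
    rw [hru]
    exact_mod_cast congrArg (Int.cast : ℤ → ℂ) h'
  have step2 : ∑ t : F, χ (1 - t ^ 2) = ∑ u : F, (ρ u + 1) * χ (1 - u) := by
    rw [← Finset.sum_fiberwise Finset.univ (fun t : F => t ^ 2)
      (fun t => χ (1 - t ^ 2))]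
    refine Finset.sum_congr rfl fun u _ => ?_
    have hfib : ∀ t ∈ Finset.univ.filter (fun t : F => t ^ 2 = u),
        χ (1 - t ^ 2) = χ (1 - u) := by
      intro t ht
      rw [Finset.mem_filter] at ht
      rw [ht.2]
    rw [Finset.sum_congr rfl hfib, Finset.sum_const, nsmul_eq_mul, count u]
  have step3 : ∑ u : F, (ρ u + 1) * χ (1 - u) = jacobiSum ρ χ := by
    have hz : ∑ u : F, χ (1 - u) = 0 := by
      have h := Equiv.sum_comp (Equiv.subLeft (1 : F)) (fun v => χ v)
      simp only [Equiv.subLeft_apply] at h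
      rw [h]
      exact MulChar.sum_eq_zero_of_ne_one hχ
    simp_rw [add_mul, one_mul, Finset.sum_add_distrib, hz, add_zero, jacobiSum]
  rw [step1, step2, step3]

end auxHD

/-- For `m ∉ {0, q^×/2}` (mod `q^× = q-1`):
`g(-2m + q^×/2) = (g(q^×/2)/(q ω(2)^{-4m})) g(-4m) g(2m)`. -/
theorem gauss_sum_hd_two
    (F : Type) [Field F] [Fintype F] [DecidableEq F] (hodd : Odd (Fintype.card F))
    (ω : MulChar F ℂ) (hω : ∀ χ : MulChar F ℂ, ∃ m : ℤ, χ = ω ^ m)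
    (Θ : AddChar F ℂ) (hΘ : Θ ≠ 1)
    (g : ℤ → ℂ) (hg : ∀ m : ℤ, g m = ∑ x : Fˣ, (ω ^ m) (x : F) * Θ (x : F))
    (m : ℤ) (hm0 : ¬ (((Fintype.card F : ℤ) - 1) ∣ m))
    (hm2 : ¬ (((Fintype.card F : ℤ) - 1) ∣ (m - (((Fintype.card F - 1) / 2 : ℕ) : ℤ)))) :
    g (-2 * m + (((Fintype.card F - 1) / 2 : ℕ) : ℤ)) =
      g (((Fintype.card F - 1) / 2 : ℕ)) / ((Fintype.card F : ℂ) * (ω 2) ^ (-(4 * m))) *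
        g (-4 * m) * g (2 * m) := by
  classical
  set q : ℕ := Fintype.card F with hq
  set N : ℕ := q - 1 with hN
  set h : ℕ := N / 2 with hh
  have hq2 : 2 ≤ q := Fintype.one_lt_card
  have hq2' : q ≠ 2 := by
    intro hE
    rw [hE, Nat.odd_iff] at hodd
    norm_num at hodd
  have hNeven : Even N := Nat.Odd.sub_odd hodd odd_one
  obtain ⟨t, ht⟩ := hNeven
  have h2h : 2 * h = N := by omega
  have hh0 : 0 < h := by omega
  have hNcast : (N : ℤ) = (q : ℤ) - 1 := by omega
  have hNh : (2 : ℤ) * (h : ℤ) = (N : ℤ) := by exact_mod_cast h2h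
  rw [← hNcast] at hm0 hm2
  have half : ∀ a b : ℤ, 2 * a = 2 * b → a = b := fun a b hab =>
    mul_left_cancel₀ two_ne_zero hab
  -- order of ω
  have hordN : orderOf ω = N := HD.omega_order ω hω
  have hord : ∀ k : ℤ, ω ^ k = 1 ↔ (N : ℤ) ∣ k := by
    intro k
    rw [← hordN]
    exact orderOf_dvd_iff_zpow_eq_one.symm
  -- primitive additive character, nonzero card
  have Θprim : Θ.IsPrimitive := AddChar.IsPrimitive.of_ne_one hΘ
  have hq0 : (q : ℂ) ≠ 0 := Nat.cast_ne_zero.mpr (by omega)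
  have Gne : ∀ {ψ : MulChar F ℂ}, ψ ≠ 1 → gaussSum ψ Θ ≠ 0 :=
    fun hψ => gaussSum_ne_zero_of_nontrivial hq0 hψ Θprim
  -- g in terms of gaussSum
  have Gg : ∀ k : ℤ, g k = gaussSum (ω ^ k) Θ := by
    intro k
    rw [hg k, gaussSum]
    refine HD.sum_units_eq (fun x => (ω ^ k) x * Θ x) ?_
    show (ω ^ k) (0 : F) * Θ 0 = 0
    rw [MulChar.map_nonunit _ not_isUnit_zero, zero_mul]
  -- the quadratic character is ω ^ h
  set ρ : MulChar F ℂ := (quadraticChar F).ringHomComp (Int.castRingHom ℂ) with hρdef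
  have hρ1 : ρ ≠ 1 :=
    (MulChar.ringHomComp_ne_one_iff (Int.cast_injective)).mpr
      (quadraticChar_ne_one (HD.char_ne_two hodd))
  have hρsq : ρ ^ 2 = 1 :=
    ((quadraticChar_isQuadratic F).comp (Int.castRingHom ℂ)).sq_eq_one
  have hρω : ρ = ω ^ (h : ℤ) := by
    obtain ⟨k, hk⟩ := hω ρ
    have h2k : (N : ℤ) ∣ 2 * k := by
      rw [← hord]
      have hpow : ω ^ (2 * k) = (ω ^ k) ^ (2 : ℕ) := by
        rw [← zpow_natCast, ← zpow_mul]
        congr 1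
        ring
      rw [hpow, ← hk]
      exact hρsq
    have hknd : ¬ (N : ℤ) ∣ k := by
      intro hd
      exact hρ1 (hk.trans ((hord k).mpr hd))
    obtain ⟨c, hc2⟩ := h2k
    have hhk : k = (h : ℤ) * c := by
      apply half
      linear_combination hc2 + c * hNh.symm
    rcases Int.even_or_odd c with ⟨r, hr⟩ | ⟨r, hr⟩
    · exfalso
      exact hknd ⟨r, by linear_combination hhk + (h : ℤ) * hr + r * hNh⟩
    · have hkval : k = (N : ℤ) * r + (h : ℤ) := by
        linear_combination hhk + (h : ℤ) * hr + r * hNh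
      rw [hk, hkval, zpow_add, zpow_mul, (hord N).mpr dvd_rfl, one_zpow, one_mul]
  -- divisibility facts
  have hA1 : ¬ (N : ℤ) ∣ 2 * m := by
    rintro ⟨j, hj⟩
    rcases Int.even_or_odd j with ⟨r, hr⟩ | ⟨r, hr⟩
    · refine hm0 ⟨r, half _ _ ?_⟩
      linear_combination hj + (N : ℤ) * hr
    · refine hm2 ⟨r, half _ _ ?_⟩
      linear_combination hj + (N : ℤ) * hr - hNh
  by_cases hc : (N : ℤ) ∣ (2 * m - (h : ℤ))
  · -- edge case : ω ^ (2m) = ρ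
    obtain ⟨j, hj⟩ := hc
    have hheven : ∃ r : ℤ, (h : ℤ) = 2 * r := by
      refine ⟨m - (h : ℤ) * j, ?_⟩
      linear_combination -hj + j * hNh
    have e1 : ω ^ (-2 * m + (h : ℤ)) = 1 :=
      (hord _).mpr ⟨-j, by linear_combination -hj⟩
    have e2 : ω ^ (-4 * m) = 1 :=
      (hord _).mpr ⟨-(1 + 2 * j), by linear_combination -2 * hj - hNh⟩
    have e3 : ω ^ (2 * m) = ρ := by
      rw [hρω]
      have hval : (2 : ℤ) * m = (N : ℤ) * j + (h : ℤ) := by linear_combination hj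
      rw [hval, zpow_add, zpow_mul, (hord N).mpr dvd_rfl, one_zpow, one_mul]
    have h2ne : (2 : F) ≠ 0 := Ring.two_ne_zero (HD.char_ne_two hodd)
    have hω2 : (ω 2) ^ (-(4 * m)) = 1 := by
      have hu : ((Units.mk0 (2 : F) h2ne : Fˣ) : F) = (2 : F) := rfl
      have harg : (ω 2) ^ (-(4 * m)) = (ω ^ (-(4 * m))) ((Units.mk0 (2 : F) h2ne : Fˣ) : F) := by
        rw [HD.zpow_apply, hu]
      rw [harg, show -(4 * m) = -4 * m by ring, e2, MulChar.one_apply_coe]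
    have G1 : gaussSum (1 : MulChar F ℂ) Θ = -1 := by
      rw [gaussSum]
      rw [← Finset.add_sum_erase _ _ (Finset.mem_univ (0 : F))]
      rw [MulChar.map_nonunit _ not_isUnit_zero, zero_mul, zero_add]
      have hone : ∀ x ∈ Finset.univ.erase (0 : F),
          (1 : MulChar F ℂ) x * Θ x = Θ x := by
        intro x hx
        rw [MulChar.one_apply (isUnit_iff_ne_zero.mpr (Finset.mem_erase.mp hx).1), one_mul]
      rw [Finset.sum_congr rfl hone, Finset.sum_erase_eq_sub (Finset.mem_univ (0 : F)),
        AddChar.sum_eq_zero_of_ne_one hΘ, AddChar.map_zero_eq_one, zero_sub]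
    have Gρsq : gaussSum ρ Θ * gaussSum ρ Θ = (q : ℂ) := by
      have hsq := gaussSum_sq hρ1 ((quadraticChar_isQuadratic F).comp _) Θprim
      have hρm1 : ρ (-1 : F) = 1 := by
        obtain ⟨r, hr⟩ := hheven
        have hu : ((-1 : Fˣ) : F) = (-1 : F) := by simp
        rw [hρω, ← hu, HD.zpow_apply, hu, hr, zpow_mul]
        have hsq1 : (ω (-1 : F)) ^ (2 : ℤ) = 1 := by
          rw [show ((2 : ℤ)) = ((2 : ℕ) : ℤ) by norm_num, zpow_natCast, sq, ← map_mul]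
          norm_num
        rw [hsq1, one_zpow]
      rw [← sq, hsq, hρm1, one_mul]
    rw [Gg, Gg, Gg, Gg, e1, e2, e3, ← hρω, G1, hω2, mul_one]
    field_simp
    linear_combination Gρsq
  · -- generic case
    set χ : MulChar F ℂ := ω ^ (-2 * m) with hχdef
    have hA2 : ¬ (N : ℤ) ∣ 4 * m := by
      rintro ⟨j, hj⟩
      rcases Int.even_or_odd j with ⟨r, hr⟩ | ⟨r, hr⟩
      · refine hA1 ⟨r, half _ _ ?_⟩
        linear_combination hj + (N : ℤ) * hr
      · refine hc ⟨r, half _ _ ?_⟩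
        linear_combination hj + (N : ℤ) * hr - hNh
    have hχ1 : χ ≠ 1 := by
      intro hE
      obtain ⟨j, hj⟩ := (hord _).mp hE
      exact hA1 ⟨-j, by linear_combination -hj⟩
    have hχχexp : χ * χ = ω ^ (-4 * m) := by
      rw [hχdef, ← zpow_add]
      congr 1
      ring
    have hχχ : χ * χ ≠ 1 := by
      rw [hχχexp]
      intro hE
      obtain ⟨j, hj⟩ := (hord _).mp hE
      exact hA2 ⟨-j, by linear_combination -hj⟩
    have hρχexp : ρ * χ = ω ^ (-2 * m + (h : ℤ)) := by
      rw [hρω, hχdef, ← zpow_add]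
      congr 1
      ring
    have hρχ : ρ * χ ≠ 1 := by
      rw [hρχexp]
      intro hE
      obtain ⟨j, hj⟩ := (hord _).mp hE
      exact hc ⟨-j, by linear_combination -hj⟩
    have h2ne : (2 : F) ≠ 0 := Ring.two_ne_zero (HD.char_ne_two hodd)
    have hω2ne : ω 2 ≠ 0 := by
      have hval : ω 2 = ((MulChar.equivToUnitHom ω (Units.mk0 (2 : F) h2ne) : ℂˣ) : ℂ) := by
        rw [MulChar.coe_equivToUnitHom]
        rfl
      rw [hval]
      exact Units.ne_zero _
    have hχ4 : χ 4 = (ω 2) ^ (-(4 * m)) := by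
      have h4 : (4 : F) = ((Units.mk0 (2 : F) h2ne * Units.mk0 (2 : F) h2ne : Fˣ) : F) := by
        show (4 : F) = 2 * 2
        norm_num
      rw [hχdef, h4, HD.zpow_apply]
      rw [show ((Units.mk0 (2 : F) h2ne * Units.mk0 (2 : F) h2ne : Fˣ) : F)
        = (2 : F) * (2 : F) from rfl, map_mul]
      rw [show ω (2 : F) * ω (2 : F) = (ω (2 : F)) ^ ((2 : ℕ) : ℤ) by
        rw [zpow_natCast, sq]]
      rw [← zpow_mul]
      congr 1
      ring
    have hχ4ne : χ 4 ≠ 0 := by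
      rw [hχ4]
      exact zpow_ne_zero _ hω2ne
    have R1 := jacobiSum_eq_gaussSum_mul_gaussSum_div_gaussSum hq0 hχχ Θprim
    have R2 := jacobiSum_eq_gaussSum_mul_gaussSum_div_gaussSum hq0 hρχ Θprim
    have R3 := HD.jac_key hodd hχ1
    rw [← hρdef] at R3
    have key : gaussSum ρ Θ * gaussSum χ Θ * gaussSum (χ * χ) Θ
        = χ 4 * (gaussSum χ Θ * gaussSum χ Θ) * gaussSum (ρ * χ) Θ := by
      have e := R3
      rw [R1, R2] at e
      rw [← mul_div_assoc] at e
      exact (div_eq_div_iff (Gne hρχ) (Gne hχχ)).mp e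
    have R4 : gaussSum χ Θ * gaussSum (ω ^ (2 * m)) Θ = (q : ℂ) := by
      have hinv : χ⁻¹ = ω ^ (2 * m) := by
        rw [hχdef, ← zpow_neg]
        congr 1
        ring
      have base := gaussSum_mul_gaussSum_eq_card hχ1 Θprim
      have hm1 : χ⁻¹ (-1 : F) = 1 := by
        have hu : ((-1 : Fˣ) : F) = (-1 : F) := by simp
        rw [hinv, ← hu, HD.zpow_apply, hu, zpow_mul]
        have hsq1 : (ω (-1 : F)) ^ (2 : ℤ) = 1 := by
          rw [show ((2 : ℤ)) = ((2 : ℕ) : ℤ) by norm_num, zpow_natCast, sq, ← map_mul]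
          norm_num
        rw [hsq1, one_zpow]
      have hswap := mul_gaussSum_inv_eq_gaussSum χ⁻¹ Θ
      rw [hm1, one_mul] at hswap
      rw [← hinv, ← hswap]
      exact base
    have hE2m : gaussSum (ω ^ (2 * m)) Θ = (q : ℂ) / gaussSum χ Θ := by
      rw [eq_div_iff (Gne hχ1), mul_comm]
      exact R4
    rw [Gg, Gg, Gg, Gg, ← hρχexp, ← hχχexp, ← hρω, ← hχ4, hE2m]
    have key2 : gaussSum ρ Θ * gaussSum (χ * χ) Θ
        = χ 4 * gaussSum χ Θ * gaussSum (ρ * χ) Θ :=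
      mul_left_cancel₀ (Gne hχ1) (by linear_combination key)
    have hCval : gaussSum (ρ * χ) Θ
        = gaussSum ρ Θ * gaussSum (χ * χ) Θ / (χ 4 * gaussSum χ Θ) := by
      rw [eq_div_iff (mul_ne_zero hχ4ne (Gne hχ1))]
      linear_combination -key2
    rw [hCval]
    field_simp
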